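/- Let n ≥ 1, μ ∈ (0,1), α ≥ 0, t₀ < −1 and x₀ ∈ ℝⁿ, and set ρ = √((2−μ)/μ · 4n(−t₀)). Define b̂(x,t) = √(2n(t−t₀) + |x−x₀|²) + α t for (x,t) ∈ closure(B_ρ(x₀)) × [0,−t₀]. Then: (a) ∂_t b̂ − g^{ij}(δ,∇b̂) b̂_{ij} = α on B_ρ(x₀) × (0,−t₀), where b̂_{ij} = ∂_i∂_j b̂; (b) 1 − |∇b̂|² ≥ μ/4 on closure(B_ρ(x₀)) × [0,−t₀]; (c) for |x−x₀| = ρ and t ∈ [0,−t₀], the radial derivative satisfies ⟨∇b̂(x,t), (x−x₀)/|x−x₀|⟩ ≥ √(1 − μ/2). -/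

import Mathlib

noncomputable section
open Real Set Filter

/-- Partial derivative of `f` at `x` in the `i`-th coordinate direction. -/
def pd {n : ℕ} (i : Fin n) (f : EuclideanSpace ℝ (Fin n) → ℝ) (x : EuclideanSpace ℝ (Fin n)) : ℝ :=
  fderiv ℝ f x (EuclideanSpace.single i 1)

/-- The shifted and tilted light-cone barrier `b̂(x,t) = √(2n(t−t₀)+|x−x₀|²) + αt`. -/
def bhat (n : ℕ) (t₀ α : ℝ) (x₀ : EuclideanSpace ℝ (Fin n)) (t : ℝ)
    (x : EuclideanSpace ℝ (Fin n)) : ℝ :=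
  Real.sqrt (2 * n * (t - t₀) + ‖x - x₀‖ ^ 2) + α * t



variable {n : ℕ} (x₀ x : EuclideanSpace ℝ (Fin n)) (c : ℝ)

lemma norm_sq_eq' (v : EuclideanSpace ℝ (Fin n)) : ‖v‖^2 = ∑ k, (v k)^2 := by
  rw [EuclideanSpace.norm_eq, Real.sq_sqrt (by positivity)]
  simp [sq_abs]

lemma sub_app (a b : EuclideanSpace ℝ (Fin n)) (k : Fin n) : (a - b) k = a k - b k := rfl

lemma Lmap_apply (i : Fin n) :
    (∑ k, (2*(x k - x₀ k)) • (EuclideanSpace.proj (𝕜 := ℝ) k)) (EuclideanSpace.single i 1)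
      = 2*(x i - x₀ i) := by
  simp [ContinuousLinearMap.sum_apply, EuclideanSpace.single_apply, mul_ite,
    Finset.sum_ite_eq]

lemma hQfd : HasFDerivAt (fun y : EuclideanSpace ℝ (Fin n) => c + ∑ k, (y k - x₀ k)^2)
    (∑ k, (2*(x k - x₀ k)) • (EuclideanSpace.proj (𝕜 := ℝ) k)) x := by
  have h : ∀ k : Fin n, HasFDerivAt (fun y : EuclideanSpace ℝ (Fin n) => (y k - x₀ k)^2)
      ((2*(x k - x₀ k)) • (EuclideanSpace.proj (𝕜 := ℝ) k)) x := by
    intro k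
    have h1 : HasFDerivAt (fun y : EuclideanSpace ℝ (Fin n) => y k - x₀ k)
        (EuclideanSpace.proj (𝕜 := ℝ) k) x :=
      ((EuclideanSpace.proj (𝕜 := ℝ) k).hasFDerivAt (x := x)).sub_const (x₀ k)
    have h2 := h1.fun_mul h1
    simp only [← sq] at h2
    refine h2.congr_fderiv ?_
    ext v
    simp
    ring
  exact (HasFDerivAt.fun_sum (fun k _ => h k)).const_add c

lemma bhat_eq_fun (t₀ α t : ℝ) : bhat n t₀ α x₀ t = fun y : EuclideanSpace ℝ (Fin n) =>
    Real.sqrt (2*n*(t-t₀) + ∑ k, (y k - x₀ k)^2) + α * t := by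
  funext y
  simp [bhat, norm_sq_eq', sub_app y x₀]

lemma hbfd (t₀ α t : ℝ) (ht : 0 < 2*(n:ℝ)*(t-t₀)) :
    HasFDerivAt (bhat n t₀ α x₀ t)
      ((1/(2*Real.sqrt (2*n*(t-t₀) + ∑ k, (x k - x₀ k)^2))) •
        (∑ k, (2*(x k - x₀ k)) • (EuclideanSpace.proj (𝕜 := ℝ) k))) x := by
  have hQpos : (0:ℝ) < 2*n*(t-t₀) + ∑ k, (x k - x₀ k)^2 := by positivity
  rw [bhat_eq_fun]
  exact ((Real.hasDerivAt_sqrt hQpos.ne').comp_hasFDerivAt x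
    (hQfd x₀ x (2*n*(t-t₀)))).add_const (α*t)

lemma pd_bhat (t₀ α t : ℝ) (ht : 0 < 2*(n:ℝ)*(t-t₀)) (i : Fin n) :
    pd i (bhat n t₀ α x₀ t) x
      = (x i - x₀ i) / Real.sqrt (2*n*(t-t₀) + ∑ k, (x k - x₀ k)^2) := by
  have hQpos : (0:ℝ) < 2*n*(t-t₀) + ∑ k, (x k - x₀ k)^2 := by positivity
  have hq : (0:ℝ) < Real.sqrt (2*n*(t-t₀) + ∑ k, (x k - x₀ k)^2) := Real.sqrt_pos.2 hQpos
  rw [pd, (hbfd x₀ x t₀ α t ht).fderiv]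
  rw [ContinuousLinearMap.smul_apply, Lmap_apply]
  rw [smul_eq_mul, div_mul_eq_mul_div, one_mul, mul_div_mul_left _ _ two_ne_zero]

lemma pd_pd_bhat (t₀ α t : ℝ) (ht : 0 < 2*(n:ℝ)*(t-t₀)) (i j : Fin n) :
    pd i (fun y => pd j (bhat n t₀ α x₀ t) y) x
      = (if i = j then (1:ℝ) else 0) / Real.sqrt (2*n*(t-t₀) + ∑ k, (x k - x₀ k)^2)
        - (x i - x₀ i) * (x j - x₀ j) /
          ((2*n*(t-t₀) + ∑ k, (x k - x₀ k)^2) *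
            Real.sqrt (2*n*(t-t₀) + ∑ k, (x k - x₀ k)^2)) := by
  have hfe : (fun y => pd j (bhat n t₀ α x₀ t) y)
      = fun y : EuclideanSpace ℝ (Fin n) =>
        (y j - x₀ j) * (Real.sqrt (2*n*(t-t₀) + ∑ k, (y k - x₀ k)^2))⁻¹ :=
    funext fun y => by rw [pd_bhat x₀ y t₀ α t ht j, div_eq_mul_inv]
  have hQpos : (0:ℝ) < 2*n*(t-t₀) + ∑ k, (x k - x₀ k)^2 := by positivity
  have hq : (0:ℝ) < Real.sqrt (2*n*(t-t₀) + ∑ k, (x k - x₀ k)^2) := Real.sqrt_pos.2 hQpos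
  have hnum : HasFDerivAt (fun y : EuclideanSpace ℝ (Fin n) => y j - x₀ j)
      (EuclideanSpace.proj (𝕜 := ℝ) j) x :=
    ((EuclideanSpace.proj (𝕜 := ℝ) j).hasFDerivAt (x := x)).sub_const (x₀ j)
  have hden : HasFDerivAt
      (fun y : EuclideanSpace ℝ (Fin n) => Real.sqrt (2*n*(t-t₀) + ∑ k, (y k - x₀ k)^2))
      ((1/(2*Real.sqrt (2*n*(t-t₀) + ∑ k, (x k - x₀ k)^2))) •
        (∑ k, (2*(x k - x₀ k)) • (EuclideanSpace.proj (𝕜 := ℝ) k))) x :=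
    (Real.hasDerivAt_sqrt hQpos.ne').comp_hasFDerivAt x (hQfd x₀ x (2*n*(t-t₀)))
  have hinv := (hasDerivAt_inv hq.ne').comp_hasFDerivAt x hden
  have h := hnum.fun_mul hinv
  simp only [Function.comp_def] at h
  rw [pd, hfe, h.fderiv]
  rw [ContinuousLinearMap.add_apply, ContinuousLinearMap.smul_apply,
    ContinuousLinearMap.smul_apply, ContinuousLinearMap.smul_apply,
    ContinuousLinearMap.smul_apply, Lmap_apply]
  have hproj : (EuclideanSpace.proj (𝕜 := ℝ) j) (EuclideanSpace.single i 1)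
      = if i = j then (1:ℝ) else 0 := by
    simp [EuclideanSpace.single_apply]
    by_cases h : i = j <;> simp [h, eq_comm]
  rw [hproj, Real.sq_sqrt hQpos.le]
  rw [smul_eq_mul, smul_eq_mul, smul_eq_mul, smul_eq_mul]
  set A := 2*(n:ℝ)*(t-t₀) + ∑ k, (x k - x₀ k)^2 with hA
  set q := Real.sqrt A with hqd
  have hq2 : q^2 = A := Real.sq_sqrt hQpos.le
  clear_value q
  clear_value A
  rw [← hq2]
  field_simp
  split_ifs <;> ring

lemma deriv_bhat_t (t₀ α t : ℝ) (hQ : 0 < 2*(n:ℝ)*(t-t₀) + ‖x - x₀‖^2) :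
    deriv (fun s => bhat n t₀ α x₀ s x) t
      = n / Real.sqrt (2*n*(t-t₀) + ‖x - x₀‖^2) + α := by
  have hu : HasDerivAt (fun s : ℝ => 2*(n:ℝ)*(s-t₀) + ‖x - x₀‖^2) (2*(n:ℝ)) t := by
    simpa using (((hasDerivAt_id t).sub_const t₀).const_mul (2*(n:ℝ))).add_const (‖x - x₀‖^2)
  have hs : HasDerivAt (fun s : ℝ => Real.sqrt (2*(n:ℝ)*(s-t₀) + ‖x - x₀‖^2))
      (1/(2*Real.sqrt (2*(n:ℝ)*(t-t₀) + ‖x - x₀‖^2)) * (2*(n:ℝ))) t :=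
    (Real.hasDerivAt_sqrt hQ.ne').comp t hu
  have ha : HasDerivAt (fun s : ℝ => α * s) α t := by
    simpa using (hasDerivAt_id t).const_mul α
  have h := (hs.fun_add ha).deriv
  simp only [bhat]
  rw [h]
  have hq : (0:ℝ) < Real.sqrt (2*n*(t-t₀) + ‖x - x₀‖^2) := Real.sqrt_pos.2 hQ
  field_simp

/- STATEMENT 10: Properties of the barrier b̂ on closure(B_ρ(x₀)) × [0,−t₀], with
ρ = √((2−μ)/μ · 4n(−t₀)): (a) ∂_t b̂ − g^{ij}(δ,∇b̂) b̂_{ij} = α; (b) 1 − |∇b̂|² ≥ μ/4;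
(c) the radial derivative on |x−x₀| = ρ is at least √(1−μ/2). -/
set_option maxHeartbeats 2000000 in
theorem stmt_10 (n : ℕ) (hn : 1 ≤ n) (μ α t₀ : ℝ) (hμ : μ ∈ Set.Ioo (0:ℝ) 1)
    (hα : 0 ≤ α) (ht₀ : t₀ < -1) (x₀ : EuclideanSpace ℝ (Fin n)) :
    -- (a)
    (∀ (t : ℝ) (x : EuclideanSpace ℝ (Fin n)), 0 < t → t < -t₀ →
      ‖x - x₀‖ < Real.sqrt ((2 - μ) / μ * (4 * n * (-t₀))) →
      deriv (fun s => bhat n t₀ α x₀ s x) t -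
        ∑ i, ∑ j,
          ((if i = j then (1:ℝ) else 0) +
            pd i (bhat n t₀ α x₀ t) x * pd j (bhat n t₀ α x₀ t) x /
              (1 - ∑ k, (pd k (bhat n t₀ α x₀ t) x) ^ 2)) *
          pd i (fun y => pd j (bhat n t₀ α x₀ t) y) x = α) ∧
    -- (b)
    (∀ (t : ℝ) (x : EuclideanSpace ℝ (Fin n)), 0 ≤ t → t ≤ -t₀ →
      ‖x - x₀‖ ≤ Real.sqrt ((2 - μ) / μ * (4 * n * (-t₀))) →
      μ / 4 ≤ 1 - ∑ k, (pd k (bhat n t₀ α x₀ t) x) ^ 2) ∧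
    -- (c)
    (∀ (t : ℝ) (x : EuclideanSpace ℝ (Fin n)), 0 ≤ t → t ≤ -t₀ →
      ‖x - x₀‖ = Real.sqrt ((2 - μ) / μ * (4 * n * (-t₀))) →
      Real.sqrt (1 - μ / 2) ≤
        ∑ i, pd i (bhat n t₀ α x₀ t) x * ((x i - x₀ i) / ‖x - x₀‖)) := by
  have hn' : (1:ℝ) ≤ n := by exact_mod_cast hn
  refine ⟨?_, ?_, ?_⟩
  · -- (a)
    intro t x ht1 ht2 _
    have hS : 0 < 2*(n:ℝ)*(t-t₀) := by nlinarith
    have hQ : 0 < 2*(n:ℝ)*(t-t₀) + ∑ k, (x k - x₀ k)^2 := by positivity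
    have hnorm : ‖x - x₀‖^2 = ∑ k, (x k - x₀ k)^2 := by
      rw [norm_sq_eq']; exact Finset.sum_congr rfl fun k _ => by rw [sub_app]
    have hderiv := deriv_bhat_t x₀ x t₀ α t (by rw [hnorm]; exact hQ)
    rw [hnorm] at hderiv
    rw [hderiv]
    simp only [pd_bhat x₀ x t₀ α t hS, pd_pd_bhat x₀ x t₀ α t hS]
    set q := Real.sqrt (2*(n:ℝ)*(t-t₀) + ∑ k, (x k - x₀ k)^2) with hqd
    have hq : 0 < q := Real.sqrt_pos.2 hQ
    have hq2 : q^2 = 2*(n:ℝ)*(t-t₀) + ∑ k, (x k - x₀ k)^2 := Real.sq_sqrt hQ.le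
    have hsq : ∑ k, ((x k - x₀ k)/q)^2 = (∑ k, (x k - x₀ k)^2)/q^2 := by
      rw [Finset.sum_div]; exact Finset.sum_congr rfl fun k _ => by rw [div_pow]
    rw [hsq]
    rw [← hq2]
    set S := 2*(n:ℝ)*(t-t₀) with hSd
    set R := ∑ k, (x k - x₀ k)^2 with hRd
    have hR : 0 ≤ R := by positivity
    have hD : 1 - R/q^2 = S/q^2 := by field_simp; linarith [hq2]
    rw [hD]
    have hterm : ∀ i j : Fin n,
        ((if i = j then (1:ℝ) else 0) +
            (x i - x₀ i)/q * ((x j - x₀ j)/q) / (S/q^2)) *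
          ((if i = j then (1:ℝ) else 0)/q - (x i - x₀ i)*(x j - x₀ j)/(q^2*q))
        = (if i = j then
            (1/q - (x i - x₀ i)*(x j - x₀ j)/(q^2*q) + (x i - x₀ i)*(x j - x₀ j)/(S*q))
            else 0)
          - (x i - x₀ i)^2*(x j - x₀ j)^2/(S*q^2*q) := by
      intro i j
      split_ifs with h <;> field_simp <;> ring
    rw [Finset.sum_congr rfl fun i _ => Finset.sum_congr rfl fun j _ => hterm i j]
    have hsum2 : ∑ i : Fin n, ∑ j : Fin n,
        ((if i = j then
            (1/q - (x i - x₀ i)*(x j - x₀ j)/(q^2*q) + (x i - x₀ i)*(x j - x₀ j)/(S*q))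
            else 0)
          - (x i - x₀ i)^2*(x j - x₀ j)^2/(S*q^2*q))
        = (n/q - R/(q^2*q) + R/(S*q)) - R*R/(S*q^2*q) := by
      have hRR : ∑ i : Fin n, (x i - x₀ i)*(x i - x₀ i) = R := by
        rw [hRd]; exact Finset.sum_congr rfl fun k _ => (sq (x k - x₀ k)).symm ▸ by ring
      have hA : ∀ i : Fin n, (∑ j : Fin n, if i = j then
          (1/q - (x i - x₀ i)*(x j - x₀ j)/(q^2*q) + (x i - x₀ i)*(x j - x₀ j)/(S*q))
          else 0)
          = 1/q - (x i - x₀ i)*(x i - x₀ i)/(q^2*q) + (x i - x₀ i)*(x i - x₀ i)/(S*q) := by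
        intro i
        rw [Finset.sum_ite_eq]
        simp
      rw [Finset.sum_congr rfl fun i (_ : i ∈ Finset.univ) => Finset.sum_sub_distrib _ _,
        Finset.sum_sub_distrib]
      have hB : ∑ i : Fin n, ∑ j : Fin n, (x i - x₀ i)^2*(x j - x₀ j)^2/(S*q^2*q)
          = R*R/(S*q^2*q) := by
        calc ∑ i : Fin n, ∑ j : Fin n, (x i - x₀ i)^2*(x j - x₀ j)^2/(S*q^2*q)
            = (∑ i : Fin n, ∑ j : Fin n, (x i - x₀ i)^2*(x j - x₀ j)^2)/(S*q^2*q) := by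
              simp_rw [← Finset.sum_div]
          _ = R*R/(S*q^2*q) := by
              rw [← Finset.sum_mul_sum, hRd]
      rw [hB, Finset.sum_congr rfl fun i (_ : i ∈ Finset.univ) => hA i]
      rw [Finset.sum_add_distrib, Finset.sum_sub_distrib, Finset.sum_const,
        Finset.card_univ, Fintype.card_fin, ← Finset.sum_div, ← Finset.sum_div,
        nsmul_eq_mul, hRR]
      ring
    rw [hsum2]
    rw [hq2]
    field_simp
    ring
  · -- (b)
    intro t x ht1 ht2 hx
    have ht0 : (0:ℝ) < -t₀ := by linarith
    have hS : 0 < 2*(n:ℝ)*(t-t₀) := by nlinarith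
    have hQ : 0 < 2*(n:ℝ)*(t-t₀) + ∑ k, (x k - x₀ k)^2 := by positivity
    have hnorm : ‖x - x₀‖^2 = ∑ k, (x k - x₀ k)^2 := by
      rw [norm_sq_eq']; exact Finset.sum_congr rfl fun k _ => by rw [sub_app]
    have hρpos : 0 < (2-μ)/μ*(4*(n:ℝ)*(-t₀)) := by
      have h1 : 0 < (2-μ)/μ := div_pos (by linarith [hμ.2]) hμ.1
      have h2 : 0 < 4*(n:ℝ)*(-t₀) := by nlinarith
      exact mul_pos h1 h2
    have hr2le : (∑ k, (x k - x₀ k)^2) ≤ (2-μ)/μ*(4*(n:ℝ)*(-t₀)) := by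
      have h1 := pow_le_pow_left₀ (norm_nonneg (x - x₀)) hx 2
      rw [Real.sq_sqrt hρpos.le, hnorm] at h1
      exact h1
    have hμR : μ * (∑ k, (x k - x₀ k)^2) ≤ (2-μ)*(4*(n:ℝ)*(-t₀)) := by
      calc μ * (∑ k, (x k - x₀ k)^2) ≤ μ * ((2-μ)/μ*(4*(n:ℝ)*(-t₀))) :=
            mul_le_mul_of_nonneg_left hr2le hμ.1.le
        _ = (2-μ)*(4*(n:ℝ)*(-t₀)) := by
            field_simp
            rw [neg_inj, div_eq_iff hμ.1.ne']
            ring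
    simp only [pd_bhat x₀ x t₀ α t hS]
    set q := Real.sqrt (2*(n:ℝ)*(t-t₀) + ∑ k, (x k - x₀ k)^2) with hqd
    have hq : 0 < q := Real.sqrt_pos.2 hQ
    have hq2 : q^2 = 2*(n:ℝ)*(t-t₀) + ∑ k, (x k - x₀ k)^2 := Real.sq_sqrt hQ.le
    have hsq : ∑ k, ((x k - x₀ k)/q)^2 = (∑ k, (x k - x₀ k)^2)/q^2 := by
      rw [Finset.sum_div]; exact Finset.sum_congr rfl fun k _ => by rw [div_pow]
    rw [hsq, hq2]
    have hD : 1 - (∑ k, (x k - x₀ k)^2)/(2*(n:ℝ)*(t-t₀) + ∑ k, (x k - x₀ k)^2)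
        = (2*(n:ℝ)*(t-t₀))/(2*(n:ℝ)*(t-t₀) + ∑ k, (x k - x₀ k)^2) := by
      field_simp
      ring
    rw [hD, le_div_iff₀ hQ]
    have hS2 := mul_le_mul_of_nonneg_left
      (show 2*(n:ℝ)*(-t₀) ≤ 2*(n:ℝ)*(t-t₀) by nlinarith)
      (show (0:ℝ) ≤ 4-μ by linarith [hμ.2])
    nlinarith [hμR, hS2, mul_nonneg (mul_nonneg hμ.1.le
      (by positivity : (0:ℝ) ≤ (n:ℝ))) ht0.le]
  · -- (c)
    intro t x ht1 ht2 hx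
    have ht0 : (0:ℝ) < -t₀ := by linarith
    have hS : 0 < 2*(n:ℝ)*(t-t₀) := by nlinarith
    have hQ : 0 < 2*(n:ℝ)*(t-t₀) + ∑ k, (x k - x₀ k)^2 := by positivity
    have hnorm : ‖x - x₀‖^2 = ∑ k, (x k - x₀ k)^2 := by
      rw [norm_sq_eq']; exact Finset.sum_congr rfl fun k _ => by rw [sub_app]
    have hρpos : 0 < (2-μ)/μ*(4*(n:ℝ)*(-t₀)) := by
      have h1 : 0 < (2-μ)/μ := div_pos (by linarith [hμ.2]) hμ.1
      have h2 : 0 < 4*(n:ℝ)*(-t₀) := by nlinarith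
      exact mul_pos h1 h2
    have hrpos : 0 < ‖x - x₀‖ := by rw [hx]; exact Real.sqrt_pos.2 hρpos
    have hr2 : ‖x - x₀‖^2 = (2-μ)/μ*(4*(n:ℝ)*(-t₀)) := by
      rw [hx, Real.sq_sqrt hρpos.le]
    simp only [pd_bhat x₀ x t₀ α t hS]
    set q := Real.sqrt (2*(n:ℝ)*(t-t₀) + ∑ k, (x k - x₀ k)^2) with hqd
    have hq : 0 < q := Real.sqrt_pos.2 hQ
    have hq2 : q^2 = 2*(n:ℝ)*(t-t₀) + ∑ k, (x k - x₀ k)^2 := Real.sq_sqrt hQ.le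
    have hsum : ∑ i, (x i - x₀ i)/q * ((x i - x₀ i)/‖x - x₀‖)
        = (∑ i, (x i - x₀ i)^2)/(q*‖x - x₀‖) := by
      rw [Finset.sum_div]
      exact Finset.sum_congr rfl fun i _ => by rw [div_mul_div_comm, ← sq]
    rw [hsum, ← hnorm]
    have heq : ‖x - x₀‖^2/(q*‖x - x₀‖) = ‖x - x₀‖/q := by
      field_simp
    rw [heq]
    have hμr2 : μ * ‖x - x₀‖^2 = (2-μ)*(4*(n:ℝ)*(-t₀)) := by
      rw [hr2]; field_simp; rw [neg_inj, div_eq_iff hμ.1.ne']; ring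
    have hS3 := mul_le_mul_of_nonneg_left
      (show 2*(n:ℝ)*(t-t₀) ≤ 4*(n:ℝ)*(-t₀) by nlinarith)
      (show (0:ℝ) ≤ 2-μ by linarith [hμ.2])
    have hle : 1 - μ/2 ≤ (‖x - x₀‖/q)^2 := by
      rw [div_pow, hq2, ← hnorm, le_div_iff₀ (by rw [hnorm]; exact hQ)]
      nlinarith [hμr2, hS3]
    calc Real.sqrt (1 - μ/2) ≤ Real.sqrt ((‖x - x₀‖/q)^2) := Real.sqrt_le_sqrt hle
      _ = ‖x - x₀‖/q := Real.sqrt_sq (div_nonneg hrpos.le hq.le)
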